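/- For positive definite real matrices X and Y with X − Y invertible and α ∈ (0,1), the matrix αX⁻¹ + (1−α)Y⁻¹ − (αX + (1−α)Y)⁻¹ is positive definite. -/

import Mathlib

open Matrix

lemma posDef_smul_aux {m : ℕ} {M : Matrix (Fin m) (Fin m) ℝ} (hM : M.PosDef)
    {c : ℝ} (hc : 0 < c) : (c • M).PosDef := by
  refine Matrix.PosDef.of_dotProduct_mulVec_pos ?_ fun x hx => ?_
  · unfold Matrix.IsHermitian
    rw [conjTranspose_smul, hM.isHermitian.eq]
    simp
  · have := hM.dotProduct_mulVec_pos hx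
    simp only [smul_mulVec, dotProduct_smul, smul_eq_mul]
    positivity

lemma posDef_conj_aux {m : ℕ} {B P : Matrix (Fin m) (Fin m) ℝ} (hP : P.PosDef)
    (hB : IsUnit B) : (B * P * Bᴴ).PosDef := by
  refine Matrix.PosDef.of_dotProduct_mulVec_pos ?_ fun x hx => ?_
  · unfold Matrix.IsHermitian
    simp only [conjTranspose_mul, conjTranspose_conjTranspose, hP.isHermitian.eq,
      Matrix.mul_assoc]
  · have hkey : star x ⬝ᵥ ((B * P * Bᴴ) *ᵥ x)
        = star (Bᴴ *ᵥ x) ⬝ᵥ (P *ᵥ (Bᴴ *ᵥ x)) := by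
      rw [star_mulVec, conjTranspose_conjTranspose, ← mulVec_mulVec, ← mulVec_mulVec,
        dotProduct_mulVec]
    rw [hkey]
    refine hP.dotProduct_mulVec_pos fun h0 => hx ?_
    have hinj : Function.Injective (Bᴴ *ᵥ ·) :=
      mulVec_injective_iff_isUnit.2 ((isUnit_conjTranspose _).2 hB)
    have : Bᴴ *ᵥ x = Bᴴ *ᵥ 0 := by simpa using h0
    exact hinj this

theorem inv_operator_strict_convex_posDef {n : ℕ}
    (X Y : Matrix (Fin n) (Fin n) ℝ) (hX : X.PosDef) (hY : Y.PosDef)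
    (hXY : IsUnit (X - Y).det)
    (α : ℝ) (hα : α ∈ Set.Ioo (0:ℝ) 1) :
    (α • X⁻¹ + (1 - α) • Y⁻¹ - (α • X + (1 - α) • Y)⁻¹).PosDef := by
  obtain ⟨hα0, hα1⟩ := hα
  have hα1' : 0 < 1 - α := by linarith
  set Z : Matrix (Fin n) (Fin n) ℝ := α • X + (1 - α) • Y with hZdef
  set D : Matrix (Fin n) (Fin n) ℝ := X - Y with hDdef
  set P : Matrix (Fin n) (Fin n) ℝ := α • Y⁻¹ + (1 - α) • X⁻¹ with hPdef
  have hZ : Z.PosDef := (posDef_smul_aux hX hα0).add (posDef_smul_aux hY hα1')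
  have hP : P.PosDef := (posDef_smul_aux hY.inv hα0).add (posDef_smul_aux hX.inv hα1')
  have hXd : IsUnit X.det := isUnit_iff_ne_zero.2 hX.det_pos.ne'
  have hYd : IsUnit Y.det := isUnit_iff_ne_zero.2 hY.det_pos.ne'
  have hZd : IsUnit Z.det := isUnit_iff_ne_zero.2 hZ.det_pos.ne'
  -- key algebraic identity
  have hmid : Z * (α • X⁻¹ + (1 - α) • Y⁻¹) * Z - Z = (α * (1 - α)) • (D * P * D) := by
    rw [hZdef, hDdef, hPdef]
    simp only [Matrix.mul_add, Matrix.add_mul, Matrix.mul_sub, Matrix.sub_mul,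
      Matrix.smul_mul, Matrix.mul_smul, Matrix.mul_assoc, smul_smul, smul_add, smul_sub,
      Matrix.mul_nonsing_inv_cancel_left _ _ hXd,
      Matrix.mul_nonsing_inv_cancel_left _ _ hYd,
      Matrix.nonsing_inv_mul _ hXd, Matrix.nonsing_inv_mul _ hYd,
      Matrix.mul_nonsing_inv _ hXd, Matrix.mul_nonsing_inv _ hYd,
      Matrix.mul_one, Matrix.one_mul]
    module
  have hkey : Z * (α • X⁻¹ + (1 - α) • Y⁻¹ - Z⁻¹) * Z = (α * (1 - α)) • (D * P * D) := by
    rw [Matrix.mul_sub, Matrix.sub_mul, Matrix.nonsing_inv_mul_cancel_right _ _ hZd, ← hmid]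
  have hLHS : α • X⁻¹ + (1 - α) • Y⁻¹ - Z⁻¹
      = (α * (1 - α)) • ((Z⁻¹ * D) * P * (Z⁻¹ * D)ᴴ) := by
    have hZH : Z⁻¹ᴴ = Z⁻¹ := by
      rw [conjTranspose_nonsing_inv, hZ.isHermitian.eq]
    have h2 : α • X⁻¹ + (1 - α) • Y⁻¹ - Z⁻¹
        = Z⁻¹ * (Z * (α • X⁻¹ + (1 - α) • Y⁻¹ - Z⁻¹) * Z) * Z⁻¹ := by
      rw [← Matrix.mul_assoc, Matrix.nonsing_inv_mul_cancel_left _ _ hZd,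
        Matrix.mul_nonsing_inv_cancel_right _ _ hZd]
    rw [h2, hkey]
    have hDH : Dᴴ = D := by
      rw [hDdef, conjTranspose_sub, hX.isHermitian.eq, hY.isHermitian.eq]
    rw [conjTranspose_mul, hZH, hDH]
    simp only [Matrix.mul_smul, Matrix.smul_mul, Matrix.mul_assoc]
  rw [show (α • X + (1 - α) • Y)⁻¹ = Z⁻¹ from rfl, hLHS]
  refine posDef_smul_aux (posDef_conj_aux hP ?_) (by nlinarith)
  exact (isUnit_nonsing_inv_iff.2 ((isUnit_iff_isUnit_det _).2 hZd)).mul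
    ((isUnit_iff_isUnit_det D).2 hXY)
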